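/- There is a point-finite family 𝒜 of sets such that A ∩ B is finite for each pair of distinct A, B ∈ 𝒜, and for every assignment of countable sets A' ⊆ A (A ∈ 𝒜), the family {A \ A' : A ∈ 𝒜} is not point-<n for any n ∈ ω. -/

import Mathlib

set_option autoImplicit false
open Cardinal

universe u v

/-- A family `⟨A_α⟩_{α ∈ ι}` of sets is point-`< τ` if for every index set `I ⊆ ι` of
cardinality `τ` the intersection `⋂_{α ∈ I} A_α` is empty. -/
def PointLt {ι : Type u} {X : Type v} (τ : Cardinal.{u}) (A : ι → Set X) : Prop :=
  ∀ I : Set ι, Cardinal.mk I = τ → ⋂ α ∈ I, A α = ∅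

def FreeProp (n : ℕ) (K : Type) : Prop :=
  ∀ S : Fin n → (Fin n → K) → Set K,
    (∀ i g, (S i g).Countable) →
    (∀ i (g g' : Fin n → K), (∀ j, j ≠ i → g j = g' j) → S i g = S i g') →
    ∃ x : Fin n → K, ∀ i, x i ∉ S i x

lemma freeBase {K : Type} (hK : ℵ₀ < #K) : FreeProp 1 K := by
  intro S hc hind
  have hne : Nonempty K := Cardinal.mk_ne_zero_iff.1 (Cardinal.aleph0_pos.trans hK).ne'
  obtain ⟨k₀⟩ := hne
  have hneq : S 0 (fun _ => k₀) ≠ Set.univ := by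
    intro h
    have h1 : (Set.univ : Set K).Countable := h ▸ hc 0 (fun _ => k₀)
    have : Countable K := Set.countable_univ_iff.1 h1
    exact hK.not_ge Cardinal.mk_le_aleph0
  obtain ⟨x₀, hx₀⟩ := (Set.ne_univ_iff_exists_notMem _).1 hneq
  refine ⟨fun _ => x₀, fun i => ?_⟩
  have : i = 0 := Subsingleton.elim _ _
  subst this
  rw [hind 0 (fun _ => x₀) (fun _ => k₀)
    (fun j hj => absurd (Subsingleton.elim j 0) hj)]
  exact hx₀

lemma freeStep {K' K : Type} (emb : K' ↪ K) (n : ℕ)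
    (hsmall : #(Fin (n + 1) → K') * ℵ₀ < #K)
    (ih : FreeProp (n + 1) K') : FreeProp (n + 2) K := by
  intro S hc hind
  have hKne : Nonempty K :=
    Cardinal.mk_ne_zero_iff.1 (zero_le.trans_lt hsmall).ne'
  obtain ⟨k₀⟩ := hKne
  set T : (Fin (n + 1) → K') → Set K :=
    fun y => S (Fin.last (n + 1)) (Fin.snoc (fun j => emb (y j)) k₀) with hT
  have hUcard : #(⋃ y, T y) ≤ #(Fin (n + 1) → K') * ℵ₀ := by
    refine (Cardinal.mk_iUnion_le T).trans ?_
    refine mul_le_mul_right ?_ _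
    exact ciSup_le' fun y => by
      have := (hc _ _ : (T y).Countable).to_subtype
      exact Cardinal.mk_le_aleph0
  have hUne : (⋃ y, T y) ≠ Set.univ := by
    intro h
    rw [h] at hUcard
    simp only [Cardinal.mk_univ] at hUcard
    exact hsmall.not_ge hUcard
  obtain ⟨γ, hγ⟩ := (Set.ne_univ_iff_exists_notMem _).1 hUne
  set S' : Fin (n + 1) → (Fin (n + 1) → K') → Set K' :=
    fun i y => emb ⁻¹' (S i.castSucc (Fin.snoc (fun j => emb (y j)) γ)) with hS'
  have hc' : ∀ i y, (S' i y).Countable := fun i y =>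
    (hc _ _).preimage emb.injective
  have hind' : ∀ i (y y' : Fin (n + 1) → K'), (∀ j, j ≠ i → y j = y' j) →
      S' i y = S' i y' := by
    intro i y y' hyy'
    have heq : S i.castSucc (Fin.snoc (fun j => emb (y j)) γ)
        = S i.castSucc (Fin.snoc (fun j => emb (y' j)) γ) := by
      apply hind
      intro j hj
      by_cases hl : j = Fin.last (n + 1)
      · subst hl; simp
      · obtain ⟨j', rfl⟩ := Fin.exists_castSucc_eq.2 hl
        have hj' : j' ≠ i := fun h => hj (by rw [h])
        simp [Fin.snoc_castSucc, hyy' j' hj']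
    simp only [hS', heq]
  obtain ⟨y, hy⟩ := ih S' hc' hind'
  refine ⟨Fin.snoc (fun j => emb (y j)) γ, fun i => ?_⟩
  by_cases hl : i = Fin.last (n + 1)
  · subst hl
    rw [Fin.snoc_last]
    have heq : S (Fin.last (n + 1)) (Fin.snoc (fun j => emb (y j)) γ) = T y := by
      apply hind
      intro j hj
      obtain ⟨j', rfl⟩ := Fin.exists_castSucc_eq.2 hj
      simp [hT, Fin.snoc_castSucc]
    rw [heq]
    exact fun h => hγ (Set.mem_iUnion.2 ⟨y, h⟩)
  · obtain ⟨j, rfl⟩ := Fin.exists_castSucc_eq.2 hl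
    rw [Fin.snoc_castSucc]
    exact hy j

/-! ### A tower of large types -/

def Kk : ℕ → Type
  | 0 => Set ℕ
  | (m + 1) => Set ((Fin (m + 1) → Kk m) × ℕ)

instance Kk.nonempty : ∀ m, Nonempty (Kk m)
  | 0 => ⟨show Set ℕ from ∅⟩
  | (m + 1) => ⟨show Set ((Fin (m + 1) → Kk m) × ℕ) from ∅⟩

instance Kk.nontrivial : ∀ m, Nontrivial (Kk m)
  | 0 => show Nontrivial (Set ℕ) from ⟨∅, Set.univ, Set.empty_ne_univ⟩
  | (m + 1) => by
    have : Nonempty ((Fin (m + 1) → Kk m) × ℕ) := by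
      have := Kk.nonempty m
      exact ⟨⟨fun _ => Classical.arbitrary _, 0⟩⟩
    exact show Nontrivial (Set ((Fin (m + 1) → Kk m) × ℕ)) from
      ⟨∅, Set.univ, Set.empty_ne_univ⟩

lemma Kk.aleph0_lt_zero : ℵ₀ < #(Kk 0) := by
  show ℵ₀ < #(Set ℕ)
  rw [Cardinal.mk_set, Cardinal.mk_nat]
  exact Cardinal.cantor ℵ₀

lemma Kk.small (m : ℕ) : #(Fin (m + 1) → Kk m) * ℵ₀ < #(Kk (m + 1)) := by
  show _ < #(Set ((Fin (m + 1) → Kk m) × ℕ))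
  rw [Cardinal.mk_set, Cardinal.mk_prod, Cardinal.mk_nat, Cardinal.lift_id,
    Cardinal.lift_id]
  exact Cardinal.cantor _

lemma Kk.le_succ (m : ℕ) : #(Kk m) ≤ #(Kk (m + 1)) := by
  have h1 : #(Kk m) ≤ #(Fin (m + 1) → Kk m) :=
    Cardinal.mk_le_of_injective (f := fun k _ => k)
      (fun a b h => congrFun h 0)
  have h2 : #(Fin (m + 1) → Kk m) ≤ #(Fin (m + 1) → Kk m) * ℵ₀ := by
    conv_lhs => rw [← mul_one (#(Fin (m + 1) → Kk m))]
    exact mul_le_mul_right Cardinal.one_le_aleph0 _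
  exact (h1.trans h2).trans (Kk.small m).le

lemma freeK : ∀ m : ℕ, FreeProp (m + 1) (Kk m) := by
  intro m
  induction m with
  | zero => exact freeBase Kk.aleph0_lt_zero
  | succ m ih =>
    obtain ⟨emb⟩ := Cardinal.le_def _ _ |>.1 (Kk.le_succ m)
    exact freeStep emb m (Kk.small m) ih

/-! ### The space: disjoint union of grids, and axis-parallel lines -/

def XX : Type := Σ m : ℕ, (Fin (m + 1) → Kk m)

def Line (m : ℕ) (i : Fin (m + 1)) (g : Fin (m + 1) → Kk m) : Set XX :=
  {x | ∃ h : Fin (m + 1) → Kk m, x = ⟨m, h⟩ ∧ ∀ j, j ≠ i → h j = g j}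

lemma XX.snd_eq {m : ℕ} {a b : Fin (m + 1) → Kk m}
    (h : (⟨m, a⟩ : XX) = ⟨m, b⟩) : a = b := by
  have := (Sigma.mk.inj_iff.1 h).2
  exact eq_of_heq this

lemma mem_line_iff {m : ℕ} {i : Fin (m + 1)} {g h : Fin (m + 1) → Kk m} :
    (⟨m, h⟩ : XX) ∈ Line m i g ↔ ∀ j, j ≠ i → h j = g j := by
  constructor
  · rintro ⟨h', heq, hh'⟩
    have := XX.snd_eq heq
    subst this
    exact hh'
  · intro hh
    exact ⟨h, rfl, hh⟩

lemma mem_line_self {m : ℕ} (i : Fin (m + 1)) (g : Fin (m + 1) → Kk m) :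
    (⟨m, g⟩ : XX) ∈ Line m i g :=
  ⟨g, rfl, fun _ _ => rfl⟩

lemma fst_eq_of_mem_line {m : ℕ} {i : Fin (m + 1)} {g : Fin (m + 1) → Kk m}
    {x : XX} (hx : x ∈ Line m i g) : x.1 = m := by
  obtain ⟨h, rfl, _⟩ := hx
  rfl

lemma line_ext {m : ℕ} {i : Fin (m + 1)} {g h : Fin (m + 1) → Kk m}
    (hgh : ∀ j, j ≠ i → h j = g j) : Line m i g = Line m i h := by
  ext x
  constructor
  · rintro ⟨h', rfl, hh'⟩
    exact ⟨h', rfl, fun j hj => by rw [hh' j hj, ← hgh j hj]⟩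
  · rintro ⟨h', rfl, hh'⟩
    exact ⟨h', rfl, fun j hj => by rw [hh' j hj, hgh j hj]⟩

lemma line_ne {m : ℕ} {i i' : Fin (m + 1)} (hii : i ≠ i')
    (g : Fin (m + 1) → Kk m) : Line m i g ≠ Line m i' g := by
  obtain ⟨z, hz⟩ := exists_ne (g i)
  intro h
  have h1 : (⟨m, Function.update g i z⟩ : XX) ∈ Line m i g :=
    mem_line_iff.2 fun j hj => Function.update_of_ne hj _ _
  rw [h] at h1
  have h2 := mem_line_iff.1 h1 i hii
  rw [Function.update_self] at h2
  exact hz h2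

lemma line_canon {A : Set XX} (hA : ∃ m i g, A = Line m i g) {m : ℕ}
    {h : Fin (m + 1) → Kk m} (hx : (⟨m, h⟩ : XX) ∈ A) :
    ∃ i : Fin (m + 1), A = Line m i h := by
  obtain ⟨m', i, g, rfl⟩ := hA
  have hm : m = m' := fst_eq_of_mem_line hx
  subst hm
  exact ⟨i, line_ext (mem_line_iff.1 hx)⟩

instance : Nonempty XX := ⟨⟨0, fun _ => Classical.arbitrary _⟩⟩

/-- There is a point-finite family `𝒜` of sets with pairwise finite intersections such
that for every assignment of countable sets `A' ⊆ A` (`A ∈ 𝒜`), the family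
`{A \ A' : A ∈ 𝒜}` is not point-`< n` for any `n ∈ ω`. -/
theorem exists_pointFinite_family_no_countable_refinement :
    ∃ (X : Type) (𝒜 : Set (Set X)),
      PointLt ℵ₀ (fun A : 𝒜 => (A : Set X)) ∧
      (∀ A ∈ 𝒜, ∀ B ∈ 𝒜, A ≠ B → (A ∩ B).Finite) ∧
      ∀ f : 𝒜 → Set X, (∀ A : 𝒜, f A ⊆ (A : Set X) ∧ (f A).Countable) →
        ∀ n : ℕ, ¬ PointLt (n : Cardinal) (fun A : 𝒜 => (A : Set X) \ f A) := by
  classical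
  refine ⟨XX, {S | ∃ m i g, S = Line m i g}, ?_, ?_, ?_⟩
  · -- point-finite
    intro I hI
    by_contra hne
    obtain ⟨x, hx⟩ := Set.nonempty_iff_ne_empty.2 hne
    obtain ⟨m, h⟩ := x
    have key : ∀ β : I, ∃ i : Fin (m + 1), ((β : _) : Set XX) = Line m i h := by
      rintro ⟨⟨A, hA⟩, hβ⟩
      exact line_canon hA (Set.mem_iInter₂.1 hx ⟨A, hA⟩ hβ)
    have hinj : Function.Injective (fun β : I => (key β).choose) := by
      intro a b hab
      have ha := (key a).choose_spec
      have hb := (key b).choose_spec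
      simp only at hab
      rw [hab] at ha
      apply Subtype.ext; apply Subtype.ext
      rw [ha, ← hb]
    have hle := Cardinal.mk_le_of_injective hinj
    rw [hI, Cardinal.mk_fin] at hle
    exact (Cardinal.nat_lt_aleph0 (m + 1)).not_ge hle
  · -- pairwise finite intersections
    rintro A ⟨m, i, g, rfl⟩ B ⟨m', i', g', rfl⟩ hAB
    by_cases hm : m = m'
    · subst hm
      by_cases hi : i = i'
      · subst hi
        by_cases hgg : ∀ j, j ≠ i → g' j = g j
        · exact absurd (line_ext hgg) hAB
        · push_neg at hgg
          obtain ⟨j, hj, hne⟩ := hgg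
          have hempty : Line m i g ∩ Line m i g' = ∅ := by
            ext x
            simp only [Set.mem_inter_iff, Set.mem_empty_iff_false, iff_false]
            rintro ⟨⟨h1, rfl, hh1⟩, h2mem⟩
            have := mem_line_iff.1 h2mem j hj
            exact hne (by rw [← this, hh1 j hj])
          rw [hempty]; exact Set.finite_empty
      · apply Set.Subsingleton.finite
        rintro x ⟨hx1, hx2⟩ y ⟨hy1, hy2⟩
        obtain ⟨h1, rfl, hh1⟩ := hx1
        obtain ⟨h2, rfl, hh2⟩ := hy1
        have hx2' := mem_line_iff.1 hx2
        have hy2' := mem_line_iff.1 hy2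
        have : h1 = h2 := by
          funext j
          by_cases hji : j = i
          · subst hji
            rw [hx2' _ hi, hy2' _ hi]
          · rw [hh1 j hji, hh2 j hji]
        rw [this]
    · have hempty : Line m i g ∩ Line m' i' g' = ∅ := by
        ext x
        simp only [Set.mem_inter_iff, Set.mem_empty_iff_false, iff_false]
        rintro ⟨hx1, hx2⟩
        exact hm ((fst_eq_of_mem_line hx1).symm.trans (fst_eq_of_mem_line hx2))
      rw [hempty]; exact Set.finite_empty
  · -- no countable refinement
    intro f hf n hP
    match n with
    | 0 =>
      have h0 := hP ∅ (by simp)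
      simp only [Set.mem_empty_iff_false, Set.iInter_of_empty, Set.iInter_univ] at h0
      exact (Set.univ_eq_empty_iff.1 h0).false (Classical.arbitrary XX)
    | (m + 1) =>
      set S : Fin (m + 1) → (Fin (m + 1) → Kk m) → Set (Kk m) := fun i g =>
        {z | (⟨m, Function.update g i z⟩ : XX) ∈
          f ⟨Line m i g, ⟨m, i, g, rfl⟩⟩} with hS
      have hc : ∀ i g, (S i g).Countable := by
        intro i g
        have hinj : Function.Injective
            (fun z : Kk m => (⟨m, Function.update g i z⟩ : XX)) := by
          intro a b hab
          have h1 := congrFun (XX.snd_eq hab) i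
          simpa [Function.update_self] using h1
        exact ((hf ⟨Line m i g, ⟨m, i, g, rfl⟩⟩).2).preimage hinj
      have hind : ∀ i (g g' : Fin (m + 1) → Kk m),
          (∀ j, j ≠ i → g j = g' j) → S i g = S i g' := by
        intro i g g' hgg
        have hLine : Line m i g = Line m i g' :=
          line_ext fun j hj => (hgg j hj).symm
        have hsub : (⟨Line m i g, ⟨m, i, g, rfl⟩⟩ :
            {S : Set XX | ∃ m i g, S = Line m i g})
            = ⟨Line m i g', ⟨m, i, g', rfl⟩⟩ := Subtype.ext hLine
        have hupd : ∀ z, Function.update g i z = Function.update g' i z := by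
          intro z; funext j
          by_cases hj : j = i
          · subst hj; simp
          · simp [Function.update_of_ne hj, hgg j hj]
        ext z
        simp only [hS, Set.mem_setOf_eq, hupd z, hsub]
      obtain ⟨x, hx⟩ := freeK m S hc hind
      set L : Fin (m + 1) → {S : Set XX | ∃ m i g, S = Line m i g} :=
        fun i => ⟨Line m i x, ⟨m, i, x, rfl⟩⟩ with hL
      have hLinj : Function.Injective L := by
        intro a b hab
        by_contra hne
        exact line_ne hne x (congrArg Subtype.val hab)
      have hIcard : #(Set.range L) = ((m + 1 : ℕ) : Cardinal) := by
        rw [Cardinal.mk_range_eq L hLinj, Cardinal.mk_fin]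
      have h0 := hP (Set.range L) hIcard
      have hmem : (⟨m, x⟩ : XX) ∈
          ⋂ α ∈ Set.range L, (((α : _) : Set XX) \ f α) := by
        refine Set.mem_iInter₂.2 ?_
        rintro α ⟨i, rfl⟩
        refine ⟨mem_line_self i x, ?_⟩
        have h1 := hx i
        simp [hS, hL, Function.update_eq_self] at h1
        exact h1
      rw [h0] at hmem
      exact hmem
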